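/- Let T be a tree that is not a single vertex, and let S ⊆ V(T) consist of at least two vertices. Construct a graph 𝒯(T) as follows: take three disjoint copies T₁, T₂, T₃ of T, and for each vertex v ∈ S, connect its three copies v₁ ∈ T₁, v₂ ∈ T₂, v₃ ∈ T₃ pairwise by edges so that they form a 3-cycle. Then gon(𝒯(T)) = 3. -/

import Mathlib

/-- A finite loopless multigraph: a finite vertex type, a finite edge type,
and an assignment of an unordered pair of distinct endpoints to each edge. -/
structure Multigraph where
  V : Type
  E : Type
  [fintypeV : Fintype V]
  [fintypeE : Fintype E]
  [decEqV : DecidableEq V]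
  ends : E → Sym2 V
  loopless : ∀ e, ¬ (ends e).IsDiag

attribute [instance] Multigraph.fintypeV Multigraph.fintypeE Multigraph.decEqV

namespace Multigraph

/-- The graph obtained by deleting the edges in `W` is connected (finite graphs are
connected iff the vertex set is nonempty and every nonempty proper vertex subset
has an edge leaving it). -/
def ConnectedWithout (G : Multigraph) (W : Set G.E) : Prop :=
  Nonempty G.V ∧
    ∀ A : Finset G.V, A.Nonempty → A ≠ Finset.univ →
      ∃ e, e ∉ W ∧ ∃ u v, G.ends e = s(u, v) ∧ u ∈ A ∧ v ∉ A

/-- `G` is connected. -/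
def Connected (G : Multigraph) : Prop := G.ConnectedWithout ∅

/-- `G` is `k`-edge-connected: deleting any set of at most `k - 1` edges
leaves a connected graph. -/
def EdgeConnected (G : Multigraph) (k : ℕ) : Prop :=
  ∀ W : Finset G.E, W.card < k → G.ConnectedWithout ↑W

/-- An edge is a bridge if deleting it disconnects the graph. -/
def IsBridge (G : Multigraph) (e : G.E) : Prop := ¬ G.ConnectedWithout {e}

/-- The graph obtained by deleting the vertices in `U` (and all incident edges)
is connected. -/
def ConnectedAvoiding (G : Multigraph) (U : Set G.V) : Prop :=
  (∃ v, v ∉ U) ∧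
    ∀ A : Finset G.V, A.Nonempty → (∀ a ∈ A, a ∉ U) → (∃ w, w ∉ U ∧ w ∉ A) →
      ∃ e u v, G.ends e = s(u, v) ∧ u ∈ A ∧ v ∉ A ∧ v ∉ U

/-- `G` is `k`-vertex-connected: deleting any set of at most `k - 1` vertices
leaves a connected graph. -/
def VertexConnected (G : Multigraph) (k : ℕ) : Prop :=
  ∀ U : Finset G.V, U.card < k → G.ConnectedAvoiding ↑U

/-- `G` is simple: no two distinct edges have the same pair of endpoints. -/
def Simple (G : Multigraph) : Prop :=
  ∀ e e' : G.E, G.ends e = G.ends e' → e = e'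

/-- The genus `g(G) = |E| - |V| + 1`. -/
def genus (G : Multigraph) : ℤ :=
  (Fintype.card G.E : ℤ) - (Fintype.card G.V : ℤ) + 1

/-- A tree is a connected graph of genus 0. -/
def IsTree (G : Multigraph) : Prop := G.Connected ∧ G.genus = 0

/-- The number of edges joining `u` and `v`. -/
noncomputable def numEdges (G : Multigraph) (u v : G.V) : ℕ :=
  Set.ncard {e : G.E | G.ends e = s(u, v)}

/-- The valence of a vertex: the number of incident edges. -/
noncomputable def valence (G : Multigraph) (v : G.V) : ℕ :=
  Set.ncard {e : G.E | v ∈ G.ends e}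

/-- A divisor on `G`: an element of the free abelian group on `V(G)`. -/
abbrev Divisor (G : Multigraph) : Type := G.V → ℤ

/-- The degree of a divisor: the sum of its coefficients. -/
def degree (G : Multigraph) (D : G.Divisor) : ℤ := ∑ v, D v

/-- A divisor is effective if all its coefficients are nonnegative. -/
def Effective (G : Multigraph) (D : G.Divisor) : Prop := ∀ v, 0 ≤ D v

/-- The Laplacian of `G` applied to an integer vector `f`. -/
noncomputable def laplacian (G : Multigraph) (f : G.V → ℤ) : G.Divisor :=
  fun v => ∑ w, (G.numEdges v w : ℤ) * (f v - f w)

/-- Linear equivalence of divisors: the difference is in the image of the Laplacian. -/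
def LinEquiv (G : Multigraph) (D D' : G.Divisor) : Prop :=
  ∃ f : G.V → ℤ, D - D' = G.laplacian f

/-- `D - F` is equivalent to an effective divisor for every effective `F` of degree `k`. -/
def RankGe (G : Multigraph) (D : G.Divisor) (k : ℤ) : Prop :=
  ∀ F : G.Divisor, G.Effective F → G.degree F = k →
    ∃ E' : G.Divisor, G.Effective E' ∧ G.LinEquiv (D - F) E'

/-- The Baker–Norine rank of a divisor. -/
noncomputable def rank (G : Multigraph) (D : G.Divisor) : ℤ :=
  sSup {r : ℤ | r = -1 ∨ (0 ≤ r ∧ G.RankGe D r)}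

/-- The (divisorial) gonality of `G`: the minimum degree of an effective divisor
of rank at least 1. -/
noncomputable def gonality (G : Multigraph) : ℕ :=
  sInf {n : ℕ | ∃ D : G.Divisor, G.Effective D ∧ G.degree D = (n : ℤ) ∧ 1 ≤ G.rank D}

lemma numEdges_comm (G : Multigraph) (u v : G.V) : G.numEdges u v = G.numEdges v u := by
  unfold numEdges
  rw [Sym2.eq_swap]

lemma sum_antisym {α : Type} [Fintype α] (n : α → α → ℕ) (hsym : ∀ x y, n x y = n y x)
    (g : α → ℤ) : ∑ x, ∑ y, (n x y : ℤ) * (g x - g y) = 0 := by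
  have h1 : ∑ x, ∑ y, (n x y : ℤ) * (g x - g y)
      = (∑ x, ∑ y, (n x y : ℤ) * g x) - ∑ x, ∑ y, (n x y : ℤ) * g y := by
    rw [← Finset.sum_sub_distrib]
    refine Finset.sum_congr rfl fun x _ => ?_
    rw [← Finset.sum_sub_distrib]
    refine Finset.sum_congr rfl fun y _ => by ring
  have h2 : ∑ x, ∑ y, (n x y : ℤ) * g y = ∑ x, ∑ y, (n x y : ℤ) * g x := by
    rw [Finset.sum_comm]
    refine Finset.sum_congr rfl fun x _ => Finset.sum_congr rfl fun y _ => by rw [hsym]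
  rw [h1, h2, sub_self]

lemma sum_laplacian (G : Multigraph) (f : G.V → ℤ) : ∑ v, G.laplacian f v = 0 :=
  sum_antisym _ (numEdges_comm G) f

lemma degree_sub (G : Multigraph) (D D' : G.Divisor) :
    G.degree (D - D') = G.degree D - G.degree D' := by
  unfold degree
  rw [← Finset.sum_sub_distrib]; rfl

lemma LinEquiv.degree_eq {G : Multigraph} {D D' : G.Divisor} (h : G.LinEquiv D D') :
    G.degree D = G.degree D' := by
  obtain ⟨f, hf⟩ := h
  have := G.sum_laplacian f
  have h2 : G.degree (D - D') = 0 := by rw [hf]; exact this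
  rw [degree_sub] at h2; omega

lemma numEdges_eq_card (G : Multigraph) (u v : G.V) :
    G.numEdges u v = (Finset.univ.filter (fun e => G.ends e = s(u, v))).card := by
  rw [numEdges, Set.ncard_eq_toFinset_card']
  congr 1
  ext e
  simp

noncomputable def perEdge (G : Multigraph) (f g : G.V → ℤ) (e : G.E) : ℤ :=
  Sym2.lift ⟨fun a b => (f a - f b) * (g a - g b), by intros; ring⟩ (G.ends e)

lemma ends_exists (G : Multigraph) (e : G.E) : ∃ a b, G.ends e = s(a, b) ∧ a ≠ b := by
  obtain ⟨⟨a, b⟩, h⟩ := Quot.exists_rep (G.ends e)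
  refine ⟨a, b, h.symm, ?_⟩
  intro hab
  exact G.loopless e (by rw [← h, hab]; exact Sym2.mk_isDiag_iff.mpr rfl)

lemma sum_mul_laplacian (G : Multigraph) (f g : G.V → ℤ) :
    ∑ v, g v * G.laplacian f v = ∑ e, G.perEdge f g e := by
  classical
  have step1 : ∑ v, g v * G.laplacian f v
      = ∑ v, ∑ w, ∑ e ∈ Finset.univ.filter (fun e => G.ends e = s(v, w)),
          g v * (f v - f w) := by
    refine Finset.sum_congr rfl fun v _ => ?_
    rw [laplacian, Finset.mul_sum]
    refine Finset.sum_congr rfl fun w _ => ?_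
    rw [numEdges_eq_card, Finset.sum_const, nsmul_eq_mul]
    push_cast; ring
  rw [step1]
  have step2 : ∀ v w : G.V, ∑ e ∈ Finset.univ.filter (fun e => G.ends e = s(v, w)),
      g v * (f v - f w) = ∑ e : G.E, if G.ends e = s(v, w) then g v * (f v - f w) else 0 := by
    intro v w; rw [Finset.sum_filter]
  simp_rw [step2]
  have swap1 : ∀ v : G.V, ∑ w : G.V, ∑ e : G.E, (if G.ends e = s(v, w) then g v * (f v - f w) else 0)
      = ∑ e : G.E, ∑ w : G.V, (if G.ends e = s(v, w) then g v * (f v - f w) else 0) :=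
    fun v => Finset.sum_comm
  simp_rw [swap1]
  rw [Finset.sum_comm]
  refine Finset.sum_congr rfl fun e _ => ?_
  obtain ⟨a, b, hab, hne⟩ := G.ends_exists e
  have key : ∀ F : G.V → G.V → ℤ,
      ∑ v : G.V, ∑ w : G.V, (if G.ends e = s(v, w) then F v w else 0) = F a b + F b a := by
    intro F
    rw [← Finset.sum_product']
    rw [← Finset.sum_filter]
    have hfil : (Finset.univ ×ˢ Finset.univ).filter (fun p : G.V × G.V => G.ends e = s(p.1, p.2))
        = {(a, b), (b, a)} := by
      ext ⟨v, w⟩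
      simp only [Finset.mem_filter, Finset.mem_product, Finset.mem_univ, true_and, hab,
        Finset.mem_insert, Finset.mem_singleton, Prod.mk.injEq, Sym2.eq_iff]
      constructor
      · rintro (⟨h1, h2⟩ | ⟨h1, h2⟩)
        · exact Or.inl ⟨h1.symm, h2.symm⟩
        · exact Or.inr ⟨h2.symm, h1.symm⟩
      · rintro (⟨h1, h2⟩ | ⟨h1, h2⟩)
        · exact Or.inl ⟨h1.symm, h2.symm⟩
        · exact Or.inr ⟨h2.symm, h1.symm⟩
    rw [hfil, Finset.sum_pair (by simp [Ne.symm hne, hne, Prod.ext_iff] : ((a : G.V), b) ≠ (b, a))]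
  rw [key]
  rw [perEdge, hab, Sym2.lift_mk]
  ring

def vertexDiv (G : Multigraph) (v : G.V) : G.Divisor := fun x => if x = v then 1 else 0

lemma laplacian_add (G : Multigraph) (f g : G.V → ℤ) :
    G.laplacian (f + g) = G.laplacian f + G.laplacian g := by
  funext v
  simp only [laplacian, Pi.add_apply, ← Finset.sum_add_distrib]
  exact Finset.sum_congr rfl fun w _ => by ring

lemma laplacian_neg (G : Multigraph) (f : G.V → ℤ) :
    G.laplacian (-f) = - G.laplacian f := by
  funext v
  simp only [laplacian, Pi.neg_apply, ← Finset.sum_neg_distrib]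
  exact Finset.sum_congr rfl fun w _ => by ring

lemma valence_eq_card (G : Multigraph) (v : G.V) :
    G.valence v = (Finset.univ.filter (fun e => v ∈ G.ends e)).card := by
  rw [valence, Set.ncard_eq_toFinset_card']
  congr 1
  ext e
  simp

lemma handshake (G : Multigraph) : ∑ v, G.valence v = 2 * Fintype.card G.E := by
  classical
  simp_rw [valence_eq_card, Finset.card_filter]
  rw [Finset.sum_comm]
  have : ∀ e : G.E, ∑ v : G.V, (if v ∈ G.ends e then 1 else 0) = 2 := by
    intro e
    obtain ⟨a, b, hab, hne⟩ := G.ends_exists e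
    rw [← Finset.card_filter]
    have : Finset.univ.filter (fun v => v ∈ G.ends e) = {a, b} := by
      ext v
      simp [hab, Sym2.mem_iff]
    rw [this, Finset.card_insert_of_notMem (by simp [hne]), Finset.card_singleton]
  simp_rw [this]
  simp [Finset.card_univ, mul_comm]

lemma exists_leaf (G : Multigraph) (hconn : G.Connected) (hgen : G.genus = 0)
    (hcard : 2 ≤ Fintype.card G.V) : ∃ l : G.V, G.valence l = 1 := by
  by_contra h
  push_neg at h
  have hge : ∀ v, 2 ≤ G.valence v := by
    intro v
    have h1 : 1 ≤ G.valence v := by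
      have hA : ({v} : Finset G.V).Nonempty := ⟨v, by simp⟩
      have hne : ({v} : Finset G.V) ≠ Finset.univ := by
        intro hcontra
        have h2 : ({v} : Finset G.V).card = Fintype.card G.V := by
          rw [hcontra, Finset.card_univ]
        simp at h2
        omega
      obtain ⟨e, -, a, b, hab, ha, hb⟩ := hconn.2 {v} hA hne
      have hav : a = v := by simpa using ha
      have hmem : v ∈ G.ends e := by rw [hab, ← hav]; exact Sym2.mem_mk_left a b
      have hne2 : ({e' : G.E | v ∈ G.ends e'}).Nonempty := ⟨e, hmem⟩
      have := Set.ncard_pos (s := {e' : G.E | v ∈ G.ends e'}) (Set.toFinite _)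
      rw [valence]
      exact this.mpr hne2
    have hv1 := h v; omega
  have hsum : 2 * Fintype.card G.V ≤ ∑ v, G.valence v := by
    calc 2 * Fintype.card G.V = ∑ _v : G.V, 2 := by rw [Finset.sum_const, Finset.card_univ]; ring
    _ ≤ _ := Finset.sum_le_sum fun v _ => hge v
  rw [handshake] at hsum
  rw [genus] at hgen
  omega

lemma laplacian_indicator (G : Multigraph) (l : G.V) (x : G.V) :
    G.laplacian (fun z => if z = l then (1:ℤ) else 0) x
      = (if x = l then (∑ w, (G.numEdges x w : ℤ)) else 0) - (G.numEdges x l : ℤ) := by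
  show ∑ w, (G.numEdges x w : ℤ) * ((if x = l then (1:ℤ) else 0) - (if w = l then 1 else 0)) = _
  trans (∑ w : G.V, ((if x = l then (G.numEdges x w : ℤ) else 0)
      - (if w = l then (G.numEdges x w : ℤ) else 0)))
  · exact Finset.sum_congr rfl fun w _ => by split_ifs <;> ring
  rw [Finset.sum_sub_distrib]
  congr 1
  · by_cases hx : x = l <;> simp [hx]
  · rw [Finset.sum_ite_eq' Finset.univ l (fun w => (G.numEdges x w : ℤ))]
    simp

lemma tree_single_equiv : ∀ (n : ℕ) (G : Multigraph), G.Connected → G.genus = 0 →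
    Fintype.card G.V = n → ∀ v w : G.V, ∃ g, G.vertexDiv v - G.vertexDiv w = G.laplacian g := by
  intro n
  induction n using Nat.strong_induction_on with
  | _ n IH =>
    intro G hconn hgen hcard v w
    classical
    by_cases hvw : v = w
    · exact ⟨fun _ => 0, by subst hvw; funext x; simp [vertexDiv, laplacian]⟩
    have h2 : 2 ≤ n := by
      by_contra hlt
      have hle : Fintype.card G.V ≤ 1 := by omega
      exact hvw (Fintype.card_le_one_iff.mp hle v w)
    obtain ⟨l, hl⟩ := G.exists_leaf hconn hgen (by omega)
    rw [valence] at hl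
    obtain ⟨e₀, he₀⟩ := Set.ncard_eq_one.mp hl
    have hinc : ∀ e : G.E, l ∈ G.ends e ↔ e = e₀ := by
      intro e
      rw [show (l ∈ G.ends e) = (e ∈ {e' : G.E | l ∈ G.ends e'}) from rfl, he₀]
      simp
    have hle₀ : l ∈ G.ends e₀ := (hinc e₀).mpr rfl
    obtain ⟨u, hu⟩ := Sym2.mem_iff_exists.mp hle₀
    have hul : u ≠ l := by
      intro h
      exact G.loopless e₀ (by rw [hu, h]; exact Sym2.mk_isDiag_iff.mpr rfl)
    -- numEdges from l
    have hnl : ∀ w : G.V, w ≠ u → G.numEdges l w = 0 := by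
      intro w hw
      by_contra hn
      obtain ⟨e, he⟩ := Set.nonempty_of_ncard_ne_zero hn
      have hee : e = e₀ := (hinc e).mp (by rw [Set.mem_setOf] at he; rw [he]; exact Sym2.mem_mk_left l w)
      rw [Set.mem_setOf, hee, hu] at he
      rcases Sym2.eq_iff.mp he with ⟨-, h2⟩ | ⟨-, h2⟩
      · exact hw h2.symm
      · exact hul h2
    have hnlu : G.numEdges l u = 1 := by
      rw [numEdges, Set.ncard_eq_one]
      refine ⟨e₀, ?_⟩
      ext e
      simp only [Set.mem_setOf, Set.mem_singleton_iff]
      constructor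
      · intro he
        exact (hinc e).mp (by rw [he]; exact Sym2.mem_mk_left l u)
      · intro he; rw [he, hu]
    -- the smaller graph
    letI : DecidableEq G.E := Classical.decEq _
    have hval_ne : ∀ (e : G.E), e ≠ e₀ → ∀ x, x ∈ G.ends e → x ≠ l := by
      intro e he x hx hxl
      exact he ((hinc e).mp (hxl ▸ hx))
    set ρ : G.V → {x : G.V // x ≠ l} := fun x => if h : x = l then ⟨u, hul⟩ else ⟨x, h⟩ with hρdef
    have hρ : ∀ (x : G.V) (hx : x ≠ l), ρ x = ⟨x, hx⟩ := fun x hx => dif_neg hx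
    have hρl : ρ l = ⟨u, hul⟩ := dif_pos rfl
    set G' : Multigraph :=
      { V := {x : G.V // x ≠ l}
        E := {e : G.E // e ≠ e₀}
        ends := fun e => Sym2.map ρ (G.ends e.1)
        loopless := by
          rintro ⟨e, he⟩ hdiag
          obtain ⟨a, b, hab, hne⟩ := G.ends_exists e
          have hal : a ≠ l := hval_ne e he a (by rw [hab]; exact Sym2.mem_mk_left a b) 
          have hbl : b ≠ l := hval_ne e he b (by rw [hab]; exact Sym2.mem_mk_right a b)
          simp only [hab, Sym2.map_pair_eq, Sym2.mk_isDiag_iff] at hdiag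
          rw [hρ a hal, hρ b hbl] at hdiag
          exact hne (Subtype.mk_eq_mk.mp hdiag) } with hG'def
    have hends' : ∀ (e : G.E) (he : e ≠ e₀), G'.ends ⟨e, he⟩ = Sym2.map ρ (G.ends e) := fun _ _ => rfl
    -- numEdges transfer
    have hnum : ∀ (x y : G.V) (hx : x ≠ l) (hy : y ≠ l),
        G'.numEdges ⟨x, hx⟩ ⟨y, hy⟩ = G.numEdges x y := by
      intro x y hx hy
      have himg : (Subtype.val '' {e : G'.E | G'.ends e = s(⟨x, hx⟩, ⟨y, hy⟩)})
          = {e : G.E | G.ends e = s(x, y)} := by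
        ext e
        constructor
        · rintro ⟨⟨e', he'⟩, hmem, rfl⟩
          have hmem' : Sym2.map ρ (G.ends e') = s((⟨x, hx⟩ : {x : G.V // x ≠ l}), ⟨y, hy⟩) := hmem
          obtain ⟨a, b, hab, hne⟩ := G.ends_exists e'
          have hal : a ≠ l := hval_ne e' he' a (by rw [hab]; exact Sym2.mem_mk_left a b)
          have hbl : b ≠ l := hval_ne e' he' b (by rw [hab]; exact Sym2.mem_mk_right a b)
          rw [hab, Sym2.map_pair_eq, hρ a hal, hρ b hbl] at hmem'
          show G.ends e' = s(x, y)
          rw [hab]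
          rcases Sym2.eq_iff.mp hmem' with ⟨h1, h2⟩ | ⟨h1, h2⟩
          · rw [Subtype.mk_eq_mk.mp h1, Subtype.mk_eq_mk.mp h2]
          · rw [Subtype.mk_eq_mk.mp h1, Subtype.mk_eq_mk.mp h2]
            exact Sym2.eq_swap
        · intro he
          rw [Set.mem_setOf] at he
          have hel : e ≠ e₀ := by
            intro h
            subst h
            rw [he] at hle₀
            rcases Sym2.mem_iff.mp hle₀ with h | h
            · exact hx h.symm
            · exact hy h.symm
          refine ⟨⟨e, hel⟩, ?_, rfl⟩
          show Sym2.map ρ (G.ends e) = _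
          rw [he, Sym2.map_pair_eq, hρ x hx, hρ y hy]
      rw [numEdges, numEdges, ← himg, Set.ncard_image_of_injective _ Subtype.val_injective]
    -- connectivity
    have hconn' : G'.Connected := by
      refine ⟨⟨⟨u, hul⟩⟩, ?_⟩
      intro A' hA'ne hA'univ
      have hz' : ∃ z' : G'.V, z' ∉ A' := by
        have h0 := hA'univ
        rw [Ne, Finset.eq_univ_iff_forall] at h0
        push_neg at h0
        exact h0
      obtain ⟨⟨z, hzl⟩, hzA'⟩ := hz'
      by_cases huA : (⟨u, hul⟩ : G'.V) ∈ A'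
      · -- add l to the projected set
        set A : Finset G.V := A'.image Subtype.val ∪ {l} with hAdef
        have hAne : A.Nonempty := ⟨l, by simp [hAdef]⟩
        have hAuniv : A ≠ Finset.univ := by
          rw [Ne, Finset.eq_univ_iff_forall]
          push_neg
          refine ⟨z, ?_⟩
          simp only [hAdef, Finset.mem_union, Finset.mem_singleton, Finset.mem_image, not_or]
          constructor
          · rintro ⟨⟨y, hy⟩, hyA', rfl⟩
            exact hzA' hyA'
          · exact hzl
        obtain ⟨e, -, a, b, hab, haA, hbA⟩ := hconn.2 A hAne hAuniv
        have hbl : b ≠ l := by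
          intro h
          exact hbA (by simp [hAdef, h])
        have huAmem : u ∈ A := Finset.mem_union_left _ (Finset.mem_image.mpr ⟨⟨u, hul⟩, huA, rfl⟩)
        have hee : e ≠ e₀ := by
          intro h
          subst h
          rw [hu] at hab
          rcases Sym2.eq_iff.mp hab with ⟨h1, h2⟩ | ⟨h1, h2⟩
          · exact hbA (h2 ▸ huAmem)
          · exact hbl h1.symm
        have hal : a ≠ l := by
          intro h
          exact hee ((hinc e).mp (by rw [hab, h]; exact Sym2.mem_mk_left l b))
        have haA' : (⟨a, hal⟩ : G'.V) ∈ A' := by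
          have : a ∈ A'.image Subtype.val := by
            rcases Finset.mem_union.mp haA with h | h
            · exact h
            · exact absurd (Finset.mem_singleton.mp h) hal
          obtain ⟨⟨y, hy⟩, hyA', hyv⟩ := Finset.mem_image.mp this
          cases hyv
          exact hyA'
        refine ⟨⟨e, hee⟩, by simp, ⟨a, hal⟩, ⟨b, hbl⟩, ?_, haA', ?_⟩
        · rw [hends', hab, Sym2.map_pair_eq, hρ a hal, hρ b hbl]
        · intro hbin
          exact hbA (by simp only [hAdef, Finset.mem_union]; exact Or.inl (Finset.mem_image.mpr ⟨⟨b, hbl⟩, hbin, rfl⟩))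
      · set A : Finset G.V := A'.image Subtype.val with hAdef
        obtain ⟨⟨y0, hy0⟩, hy0A'⟩ := hA'ne
        have hAne : A.Nonempty := ⟨y0, Finset.mem_image.mpr ⟨⟨y0, hy0⟩, hy0A', rfl⟩⟩
        have hlA : l ∉ A := by
          intro h
          obtain ⟨⟨y, hy⟩, -, hyv⟩ := Finset.mem_image.mp h
          exact hy hyv
        have hAuniv : A ≠ Finset.univ := by
          intro h
          exact hlA (h ▸ Finset.mem_univ l)
        obtain ⟨e, -, a, b, hab, haA, hbA⟩ := hconn.2 A hAne hAuniv
        have hal : a ≠ l := fun h => hlA (h ▸ haA)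
        have haA' : (⟨a, hal⟩ : G'.V) ∈ A' := by
          obtain ⟨⟨y, hy⟩, hyA', hyv⟩ := Finset.mem_image.mp haA
          cases hyv
          exact hyA'
        have hee : e ≠ e₀ := by
          intro h
          subst h
          rw [hu] at hab
          rcases Sym2.eq_iff.mp hab with ⟨h1, h2⟩ | ⟨h1, h2⟩
          · exact hal h1.symm
          · exact huA (by subst h2; exact haA')
        have hbl : b ≠ l := by
          intro h
          exact hee ((hinc e).mp (by rw [hab, h]; exact Sym2.mem_mk_right a l))
        refine ⟨⟨e, hee⟩, by simp, ⟨a, hal⟩, ⟨b, hbl⟩, ?_, haA', ?_⟩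
        · rw [hends', hab, Sym2.map_pair_eq, hρ a hal, hρ b hbl]
        · intro hbin
          exact hbA (Finset.mem_image.mpr ⟨⟨b, hbl⟩, hbin, rfl⟩)
    -- cardinalities
    have hcV : Fintype.card G'.V + 1 = Fintype.card G.V := by
      have h1 : Fintype.card {x : G.V // ¬ x = l} = Fintype.card G.V - Fintype.card {x : G.V // x = l} :=
        Fintype.card_subtype_compl _
      have h2 : Fintype.card {x : G.V // x = l} = 1 := Fintype.card_subtype_eq l
      have h3 : Fintype.card G'.V = Fintype.card {x : G.V // ¬ x = l} := rfl
      have h4 : 1 ≤ Fintype.card G.V := by omega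
      omega
    have hcE : Fintype.card G'.E + 1 = Fintype.card G.E := by
      have h1 : Fintype.card {e : G.E // ¬ e = e₀} = Fintype.card G.E - Fintype.card {e : G.E // e = e₀} :=
        Fintype.card_subtype_compl _
      have h2 : Fintype.card {e : G.E // e = e₀} = 1 := Fintype.card_subtype_eq e₀
      have h3 : Fintype.card G'.E = Fintype.card {e : G.E // ¬ e = e₀} := by
        convert rfl
      have h4 : 1 ≤ Fintype.card G.E := Fintype.card_pos_iff.mpr ⟨e₀⟩
      omega
    have hgen' : G'.genus = 0 := by
      rw [genus] at hgen ⊢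
      omega
    have IH' := IH (Fintype.card G'.V) (by omega) G' hconn' hgen' rfl
    -- lifting equivalences from G'
    have lift : ∀ (x y : G.V) (hx : x ≠ l) (hy : y ≠ l),
        ∃ g, G.vertexDiv x - G.vertexDiv y = G.laplacian g := by
      intro x y hx hy
      obtain ⟨g', hg'⟩ := IH' ⟨x, hx⟩ ⟨y, hy⟩
      refine ⟨fun z => g' (ρ z), ?_⟩
      funext z
      by_cases hzl : z = l
      · subst hzl
        have hL : (G.vertexDiv x - G.vertexDiv y) z = 0 := by
          simp [vertexDiv, Ne.symm hx, Ne.symm hy]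
        rw [hL, laplacian]
        symm
        refine Finset.sum_eq_zero fun w _ => ?_
        by_cases hw : w = u
        · rw [hw, hρl, hρ u hul]
          ring
        · rw [hnl w hw]
          push_cast
          ring
      · have hsplit := Finset.sum_filter_add_sum_filter_not Finset.univ (fun w => w ≠ l)
          (fun w => (G.numEdges z w : ℤ) * ((fun z => g' (ρ z)) z - (fun z => g' (ρ z)) w))
        have hlap : G.laplacian (fun z => g' (ρ z)) z
            = ∑ w ∈ Finset.univ.filter (fun w => w ≠ l),
                (G.numEdges z w : ℤ) * (g' (ρ z) - g' (ρ w))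
              + ∑ w ∈ Finset.univ.filter (fun w => ¬ w ≠ l),
                (G.numEdges z w : ℤ) * (g' (ρ z) - g' (ρ w)) := by
          rw [laplacian]
          exact hsplit.symm
        have hfil2 : Finset.univ.filter (fun w : G.V => ¬ w ≠ l) = {l} := by
          ext w
          simp
        have hsum2 : ∑ w ∈ Finset.univ.filter (fun w : G.V => ¬ w ≠ l),
            (G.numEdges z w : ℤ) * (g' (ρ z) - g' (ρ w)) = 0 := by
          rw [hfil2, Finset.sum_singleton]
          by_cases hzu : z = u
          · rw [hzu, hρl, hρ u hul]
            ring
          · rw [numEdges_comm, hnl z hzu]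
            push_cast
            ring
        have hsum1 : ∑ w ∈ Finset.univ.filter (fun w : G.V => w ≠ l),
            (G.numEdges z w : ℤ) * (g' (ρ z) - g' (ρ w))
            = G'.laplacian g' ⟨z, hzl⟩ := by
          have hsub : ∑ w ∈ Finset.univ.filter (fun w : G.V => w ≠ l),
              (G.numEdges z w : ℤ) * (g' (ρ z) - g' (ρ w))
              = ∑ w' : {x : G.V // x ≠ l}, (G.numEdges z w'.val : ℤ) * (g' (ρ z) - g' (ρ w'.val)) :=
            Finset.sum_subtype _ (by simp) _
          rw [hsub]
          show _ = ∑ w' : G'.V, (G'.numEdges ⟨z, hzl⟩ w' : ℤ) * (g' ⟨z, hzl⟩ - g' w')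
          refine Finset.sum_congr rfl fun w' _ => ?_
          obtain ⟨w, hw⟩ := w'
          rw [hnum z w hzl hw, hρ z hzl, hρ w hw]
        rw [show G.laplacian (fun z => g' (ρ z)) z
            = G'.laplacian g' ⟨z, hzl⟩ by rw [hlap, hsum2, add_zero]; exact hsum1]
        rw [← congrFun hg' ⟨z, hzl⟩]
        have hv : ∀ a : G.V, ∀ ha : a ≠ l, ((⟨z, hzl⟩ : G'.V) = ⟨a, ha⟩) = (z = a) :=
          fun a ha => propext ⟨fun h => congrArg Subtype.val h, fun h => by subst h; rfl⟩
        simp [vertexDiv, Subtype.mk.injEq, hv]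
    -- base equivalence δ_l ~ δ_u
    have base : ∃ g, G.vertexDiv l - G.vertexDiv u = G.laplacian g := by
      refine ⟨fun z => if z = l then 1 else 0, ?_⟩
      funext z
      rw [laplacian_indicator]
      have hsumn : ∑ w : G.V, (G.numEdges l w : ℤ) = 1 := by
        have : ∀ w : G.V, (G.numEdges l w : ℤ) = if w = u then 1 else 0 := by
          intro w
          by_cases hw : w = u
          · rw [hw, hnlu, if_pos rfl]
            norm_num
          · rw [hnl w hw, if_neg hw]
            norm_num
        rw [Finset.sum_congr rfl fun w _ => this w, Finset.sum_ite_eq' Finset.univ u (fun _ => (1:ℤ))]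
        simp
      simp only [Pi.sub_apply, vertexDiv]
      by_cases hzl : z = l
      · rw [hzl, if_pos rfl, if_pos rfl, if_neg (fun h => hul h.symm), hsumn,
          hnl l (fun h => hul h.symm)]
        norm_num
      · rw [if_neg hzl, if_neg hzl, numEdges_comm G z l]
        by_cases hzu : z = u
        · rw [hzu, if_pos rfl, hnlu]
          norm_num
        · rw [if_neg hzu, hnl z hzu]
          norm_num
    -- combine
    by_cases hvl : v = l
    · have hwl : w ≠ l := fun h => hvw (hvl.trans h.symm)
      obtain ⟨g1, hg1⟩ := base
      obtain ⟨g2, hg2⟩ := lift u w hul hwl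
      refine ⟨g1 + g2, ?_⟩
      rw [laplacian_add, ← hg1, ← hg2, hvl]
      funext x
      simp only [Pi.sub_apply, Pi.add_apply]
      ring
    · by_cases hwl : w = l
      · obtain ⟨g1, hg1⟩ := base
        obtain ⟨g2, hg2⟩ := lift v u hvl hul
        refine ⟨g2 + (-g1), ?_⟩
        rw [laplacian_add, laplacian_neg, ← hg1, ← hg2, hwl]
        funext x
        simp only [Pi.sub_apply, Pi.add_apply, Pi.neg_apply]
        ring
      · exact lift v w hvl hwl

-- ===================== rank plumbing =====================

lemma degree_add (G : Multigraph) (D D' : G.Divisor) :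
    G.degree (D + D') = G.degree D + G.degree D' := by
  unfold degree
  rw [← Finset.sum_add_distrib]; rfl

lemma degree_single (G : Multigraph) (p : G.V) (c : ℤ) :
    G.degree (fun x => if x = p then c else 0) = c := by
  rw [degree, Finset.sum_ite_eq' Finset.univ p fun _ => c]
  simp

lemma rankSet_bddAbove (G : Multigraph) (p₀ : G.V) (D : G.Divisor) :
    BddAbove {r : ℤ | r = -1 ∨ (0 ≤ r ∧ G.RankGe D r)} := by
  refine ⟨max (G.degree D) 0, ?_⟩
  rintro r (rfl | ⟨hr0, hrge⟩)
  · exact le_trans (by norm_num) (le_max_right _ _)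
  · obtain ⟨E', hE', hLE⟩ := hrge (fun x => if x = p₀ then r else 0)
      (fun v => by dsimp only; split_ifs <;> omega) (G.degree_single p₀ r)
    have hdeg := hLE.degree_eq
    have hdegE' : 0 ≤ G.degree E' := Finset.sum_nonneg fun v _ => hE' v
    have h2 : G.degree (D - fun x => if x = p₀ then r else 0) = G.degree D - r := by
      rw [degree_sub, degree_single]
    have : r ≤ G.degree D := by omega
    exact le_trans this (le_max_left _ _)

lemma one_le_rank (G : Multigraph) (p₀ : G.V) (D : G.Divisor) (h : G.RankGe D 1) :
    1 ≤ G.rank D :=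
  le_csSup (G.rankSet_bddAbove p₀ D) (Or.inr ⟨by norm_num, h⟩)

lemma rankGe_one_of_rank (G : Multigraph) (p₀ : G.V) (D : G.Divisor) (h : 1 ≤ G.rank D) :
    G.RankGe D 1 := by
  have hmem := Int.csSup_mem (s := {r : ℤ | r = -1 ∨ (0 ≤ r ∧ G.RankGe D r)})
    ⟨-1, Or.inl rfl⟩ (G.rankSet_bddAbove p₀ D)
  rw [show sSup {r : ℤ | r = -1 ∨ (0 ≤ r ∧ G.RankGe D r)} = G.rank D from rfl] at hmem
  rcases hmem with h1 | ⟨-, hge⟩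
  · omega
  · intro F hF hdegF
    set r := G.rank D with hr
    obtain ⟨E', hE', f, hf⟩ := hge (F + fun x => if x = p₀ then r - 1 else 0)
      (fun v => by have := hF v; simp only [Pi.add_apply]; split_ifs <;> omega)
      (by rw [degree_add, hdegF, degree_single]; ring)
    refine ⟨E' + (fun x => if x = p₀ then r - 1 else 0),
      fun v => by have := hE' v; simp only [Pi.add_apply]; split_ifs <;> omega, f, ?_⟩
    rw [← hf]
    funext x
    simp only [Pi.sub_apply, Pi.add_apply]
    ring

lemma effective_degree_one (G : Multigraph) (F : G.Divisor) (hF : G.Effective F)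
    (h1 : G.degree F = 1) : ∃ p, F = fun x => if x = p then 1 else 0 := by
  classical
  have hex : ∃ p, 1 ≤ F p := by
    by_contra hc
    push_neg at hc
    have hz : ∀ p, F p = 0 := fun p => le_antisymm (by have := hc p; omega) (hF p)
    rw [degree, Finset.sum_congr rfl fun p _ => hz p] at h1
    simp at h1
  obtain ⟨p, hp⟩ := hex
  have hsplit : F p + ∑ x ∈ Finset.univ.erase p, F x = 1 := by
    rw [Finset.add_sum_erase _ _ (Finset.mem_univ p)]
    exact h1
  have hnn : 0 ≤ ∑ x ∈ Finset.univ.erase p, F x := Finset.sum_nonneg fun x _ => hF x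
  have hrest0 : ∑ x ∈ Finset.univ.erase p, F x = 0 := by omega
  have hFp : F p = 1 := by omega
  have hzero : ∀ x ∈ Finset.univ.erase p, F x = 0 :=
    (Finset.sum_eq_zero_iff_of_nonneg fun x _ => hF x).mp hrest0
  refine ⟨p, funext fun x => ?_⟩
  by_cases hx : x = p
  · rw [hx, if_pos rfl, hFp]
  · rw [if_neg hx, hzero x (Finset.mem_erase.mpr ⟨hx, Finset.mem_univ x⟩)]

-- ===================== threshold per-edge bounds =====================

lemma perEdge_threshold_nonneg (G : Multigraph) (f : G.V → ℤ) (k : ℤ) (e : G.E) :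
    0 ≤ G.perEdge f (fun v => if k ≤ f v then 1 else 0) e := by
  obtain ⟨a, b, hab, -⟩ := G.ends_exists e
  rw [Multigraph.perEdge, hab, Sym2.lift_mk]
  dsimp only
  split_ifs with h1 h2 h2 <;> nlinarith

lemma one_le_perEdge_threshold (G : Multigraph) (f : G.V → ℤ) (k : ℤ) (e : G.E) (a b : G.V)
    (hab : G.ends e = s(a, b)) (hsplit : ¬ (k ≤ f a ↔ k ≤ f b)) :
    1 ≤ G.perEdge f (fun v => if k ≤ f v then 1 else 0) e := by
  rw [Multigraph.perEdge, hab, Sym2.lift_mk]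
  dsimp only
  split_ifs with h1 h2 h2
  · exact absurd (iff_of_true h1 h2) hsplit
  · nlinarith
  · nlinarith
  · exact absurd (iff_of_false h1 h2) hsplit

lemma three_le_sum {ι : Type} [Fintype ι] (h : ι → ℤ) (hpos : ∀ e, 0 ≤ h e)
    (e1 e2 e3 : ι) (h12 : e1 ≠ e2) (h13 : e1 ≠ e3) (h23 : e2 ≠ e3)
    (h1 : 1 ≤ h e1) (h2 : 1 ≤ h e2) (h3 : 1 ≤ h e3) : 3 ≤ ∑ e, h e := by
  classical
  have hsubset : ∑ e ∈ ({e1, e2, e3} : Finset ι), h e ≤ ∑ e, h e :=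
    Finset.sum_le_sum_of_subset_of_nonneg (Finset.subset_univ _) (fun i _ _ => hpos i)
  refine le_trans ?_ hsubset
  rw [Finset.sum_insert (by simp [h12, h13]), Finset.sum_insert (by simp [h23]),
    Finset.sum_singleton]
  omega

end Multigraph

/-- A morphism of multigraphs: vertices map to vertices, and each edge maps either
to an edge joining the images of its endpoints (if they are distinct) or to the
common image of its endpoints. -/
structure Morphism (G G' : Multigraph) where
  vertexMap : G.V → G'.V
  edgeMap : G.E → G'.E ⊕ G'.V
  map_edge_of_eq : ∀ e u v, G.ends e = s(u, v) → vertexMap u = vertexMap v →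
    edgeMap e = Sum.inr (vertexMap u)
  map_edge_of_ne : ∀ e u v, G.ends e = s(u, v) → vertexMap u ≠ vertexMap v →
    ∃ e', edgeMap e = Sum.inl e' ∧ G'.ends e' = s(vertexMap u, vertexMap v)

namespace Morphism

variable {G G' : Multigraph}

/-- The multiplicity `m_φ(v)` of `φ` at `v` with respect to an edge `e'` of `G'`. -/
noncomputable def mult (φ : Morphism G G') (v : G.V) (e' : G'.E) : ℕ :=
  Set.ncard {e : G.E | v ∈ G.ends e ∧ φ.edgeMap e = Sum.inl e'}

/-- `φ` is harmonic if `m_φ(v)` does not depend on the chosen edge `e'`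
incident to `φ(v)`. -/
def Harmonic (φ : Morphism G G') : Prop :=
  ∀ (v : G.V) (e₁ e₂ : G'.E),
    φ.vertexMap v ∈ G'.ends e₁ → φ.vertexMap v ∈ G'.ends e₂ →
      φ.mult v e₁ = φ.mult v e₂

/-- `φ` is non-degenerate if `m_φ(v) > 0` for every vertex `v`. -/
def Nondegenerate (φ : Morphism G G') : Prop :=
  ∀ (v : G.V) (e' : G'.E), φ.vertexMap v ∈ G'.ends e' → 0 < φ.mult v e'

/-- `φ` has degree `d`: every edge of `G'` has exactly `d` preimages. -/
def HasDegree (φ : Morphism G G') (d : ℕ) : Prop :=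
  Nonempty G'.E ∧ ∀ e' : G'.E, Set.ncard {e : G.E | φ.edgeMap e = Sum.inl e'} = d

end Morphism

/-- The graph `𝒯(T)`: three disjoint copies of `T`, where for each `v ∈ S` the three
copies of `v` are joined pairwise into a 3-cycle. -/
noncomputable def tripled (T : Multigraph) (S : Finset T.V) : Multigraph where
  V := Fin 3 × T.V
  E := (Fin 3 × T.E) ⊕ ({v // v ∈ S} × Fin 3)
  ends := fun e =>
    match e with
    | Sum.inl (i, e) => Sym2.map (fun v => (i, v)) (T.ends e)
    | Sum.inr (v, i) => s((i, v.1), (i + 1, v.1))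
  loopless := by
    rintro (⟨i, e⟩ | ⟨v, i⟩) h
    all_goals dsimp only at h
    · have hT := T.loopless e
      generalize hq : T.ends e = q at h hT
      induction q using Sym2.ind with
      | _ x y =>
        rw [Sym2.map_pair_eq, Sym2.mk_isDiag_iff] at h
        exact hT (Sym2.mk_isDiag_iff.mpr (congrArg Prod.snd h))
    · rw [Sym2.mk_isDiag_iff] at h
      have hi : i = i + 1 := congrArg Prod.fst h
      exact absurd (left_eq_add.mp hi) (by decide)

namespace TripledAux

open Multigraph

variable (T : Multigraph) (S : Finset T.V)

lemma ends_inl (i : Fin 3) (e : T.E) :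
    (tripled T S).ends (Sum.inl (i, e)) = Sym2.map (fun v => (i, v)) (T.ends e) := rfl

lemma ends_inr (v : {v // v ∈ S}) (i : Fin 3) :
    (tripled T S).ends (Sum.inr (v, i)) = s((i, v.1), (i + 1, v.1)) := rfl

lemma fin3_succ_ne : ∀ c : Fin 3, c + 1 ≠ c := by decide

lemma numEdges_cross (i j : Fin 3) (x y : T.V) (hij : i ≠ j) (hxy : x ≠ y ∨ x ∉ S) :
    (tripled T S).numEdges (i, x) (j, y) = 0 := by
  show Set.ncard {e : (tripled T S).E | (tripled T S).ends e = s((i, x), (j, y))} = 0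
  convert Set.ncard_empty ((tripled T S).E)
  rw [Set.eq_empty_iff_forall_notMem]
  rintro (⟨k, e⟩ | ⟨⟨v, hv⟩, c⟩) hmem
  · change (tripled T S).ends (Sum.inl (k, e)) = s((i, x), (j, y)) at hmem
    rw [ends_inl] at hmem
    obtain ⟨a, b, hab, -⟩ := T.ends_exists e
    rw [hab, Sym2.map_pair_eq] at hmem
    rcases Sym2.eq_iff.mp hmem with ⟨h1, h2⟩ | ⟨h1, h2⟩
    · exact hij (((Prod.ext_iff.mp h1).1.symm).trans (Prod.ext_iff.mp h2).1)
    · exact hij (((Prod.ext_iff.mp h2).1.symm).trans (Prod.ext_iff.mp h1).1)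
  · change (tripled T S).ends (Sum.inr (⟨v, hv⟩, c)) = s((i, x), (j, y)) at hmem
    rw [ends_inr] at hmem
    rcases Sym2.eq_iff.mp hmem with ⟨h1, h2⟩ | ⟨h1, h2⟩
    · have hvx : v = x := (Prod.ext_iff.mp h1).2
      have hvy : v = y := (Prod.ext_iff.mp h2).2
      rcases hxy with h | h
      · exact h (hvx ▸ hvy)
      · exact h (hvx ▸ hv)
    · have hvy : v = y := (Prod.ext_iff.mp h1).2
      have hvx : v = x := (Prod.ext_iff.mp h2).2
      rcases hxy with h | h
      · exact h (hvx ▸ hvy)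
      · exact h (hvx ▸ hv)

lemma numEdges_same (i : Fin 3) (x y : T.V) :
    (tripled T S).numEdges (i, x) (i, y) = T.numEdges x y := by
  show Set.ncard {e : (tripled T S).E | (tripled T S).ends e = s((i, x), (i, y))}
    = Set.ncard {e : T.E | T.ends e = s(x, y)}
  have hinj : Function.Injective (fun e : T.E => (Sum.inl (i, e) : (tripled T S).E)) := by
    intro a b h
    simpa using h
  rw [← Set.ncard_image_of_injective {e : T.E | T.ends e = s(x, y)} hinj]
  congr 1
  ext e'
  constructor
  · intro hmem
    rw [Set.mem_setOf] at hmem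
    match e' with
    | Sum.inl (k, e) =>
      rw [ends_inl] at hmem
      obtain ⟨a, b, hab, -⟩ := T.ends_exists e
      rw [hab, Sym2.map_pair_eq] at hmem
      rcases Sym2.eq_iff.mp hmem with ⟨h1, h2⟩ | ⟨h1, h2⟩
      · have hki : k = i := (Prod.ext_iff.mp h1).1
        refine ⟨e, ?_, by rw [hki]⟩
        rw [Set.mem_setOf, hab]
        rw [Sym2.eq_iff]
        exact Or.inl ⟨(Prod.ext_iff.mp h1).2, (Prod.ext_iff.mp h2).2⟩
      · have hki : k = i := (Prod.ext_iff.mp h2).1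
        refine ⟨e, ?_, by rw [hki]⟩
        rw [Set.mem_setOf, hab]
        rw [Sym2.eq_iff]
        exact Or.inr ⟨(Prod.ext_iff.mp h1).2, (Prod.ext_iff.mp h2).2⟩
    | Sum.inr (⟨v, hv⟩, c) =>
      rw [ends_inr] at hmem
      exfalso
      rcases Sym2.eq_iff.mp hmem with ⟨h1, h2⟩ | ⟨h1, h2⟩
      · exact fin3_succ_ne c (((Prod.ext_iff.mp h2).1).trans ((Prod.ext_iff.mp h1).1).symm)
      · exact fin3_succ_ne c (((Prod.ext_iff.mp h2).1).trans ((Prod.ext_iff.mp h1).1).symm)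
  · rintro ⟨e, hmem, rfl⟩
    rw [Set.mem_setOf] at hmem
    show (tripled T S).ends (Sum.inl (i, e)) = s((i, x), (i, y))
    rw [ends_inl, hmem, Sym2.map_pair_eq]

lemma sheet_sum_laplacian (f : (tripled T S).V → ℤ)
    (hconst : ∀ u ∈ S, ∀ i j : Fin 3, f (i, u) = f (j, u)) (i : Fin 3) :
    ∑ x : T.V, (tripled T S).laplacian f (i, x) = 0 := by
  have hexp : ∀ x : T.V, (tripled T S).laplacian f (i, x)
      = ∑ j : Fin 3, ∑ y : T.V,
          ((tripled T S).numEdges (i, x) (j, y) : ℤ) * (f (i, x) - f (j, y)) := by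
    intro x
    show ∑ w : Fin 3 × T.V, ((tripled T S).numEdges (i, x) w : ℤ) * (f (i, x) - f w) = _
    rw [Fintype.sum_prod_type]
  rw [Finset.sum_congr rfl fun x _ => hexp x]
  rw [Finset.sum_comm]
  refine Finset.sum_eq_zero fun j _ => ?_
  by_cases hji : j = i
  · subst hji
    exact Multigraph.sum_antisym (fun x y => (tripled T S).numEdges (j, x) (j, y))
      (fun x y => (tripled T S).numEdges_comm _ _) (fun x => f (j, x))
  · refine Finset.sum_eq_zero fun x _ => Finset.sum_eq_zero fun y _ => ?_
    by_cases hxy : x = y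
    · subst hxy
      by_cases hxS : x ∈ S
      · rw [hconst x hxS i j, sub_self, mul_zero]
      · rw [numEdges_cross T S i j x x (fun h => hji h.symm) (Or.inr hxS)]
        norm_num
    · rw [numEdges_cross T S i j x y (fun h => hji h.symm) (Or.inl hxy)]
      norm_num

lemma laplacian_lift (g : T.V → ℤ) (i : Fin 3) (x : T.V) :
    (tripled T S).laplacian (fun q => g q.2) (i, x) = T.laplacian g x := by
  show ∑ w : Fin 3 × T.V, ((tripled T S).numEdges (i, x) w : ℤ) * (g (i, x).2 - g w.2) = _
  rw [Fintype.sum_prod_type]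
  rw [show T.laplacian g x = ∑ y, (T.numEdges x y : ℤ) * (g x - g y) from rfl]
  rw [Fintype.sum_eq_single i ?_]
  · exact Finset.sum_congr rfl fun y _ => by rw [numEdges_same]
  · intro j hj
    refine Finset.sum_eq_zero fun y _ => ?_
    by_cases hxy : x = y
    · rw [hxy, sub_self, mul_zero]
    · rw [numEdges_cross T S i j x y (fun h => hj h.symm) (Or.inl hxy)]
      norm_num

lemma triangle_const (hTc : T.Connected) (hS2 : 2 ≤ S.card)
    (f : (tripled T S).V → ℤ) (E E' : (tripled T S).Divisor)
    (hE : (tripled T S).Effective E) (hE' : (tripled T S).Effective E')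
    (hL : (tripled T S).laplacian f = E - E')
    (hdeg : (tripled T S).degree E ≤ 2) :
    ∀ u ∈ S, ∀ i j : Fin 3, f (i, u) = f (j, u) := by
  intro u hu i j
  by_contra hne
  set k : ℤ := max (f (i, u)) (f (j, u)) with hk
  set χ : (tripled T S).V → ℤ := fun v => if k ≤ f v then 1 else 0 with hχ
  -- upper bound: total per-edge sum ≤ 2
  have hupper : ∑ e, (tripled T S).perEdge f χ e ≤ 2 := by
    rw [← Multigraph.sum_mul_laplacian]
    have hpt : ∀ v, χ v * (tripled T S).laplacian f v ≤ E v := by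
      intro v
      rw [hL]
      have h1 := hE v
      have h2 := hE' v
      simp only [hχ, Pi.sub_apply]
      split_ifs
      · rw [one_mul]; omega
      · rw [zero_mul]; omega
    calc ∑ v, χ v * (tripled T S).laplacian f v ≤ ∑ v, E v :=
        Finset.sum_le_sum fun v _ => hpt v
      _ = (tripled T S).degree E := rfl
      _ ≤ 2 := hdeg
  -- nonconstancy of the indicator on the u-triangle
  have hmax1 : f (i, u) ≤ k := le_max_left _ _
  have hmax2 : f (j, u) ≤ k := le_max_right _ _
  have hci : k ≤ f (i, u) ∨ k ≤ f (j, u) := by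
    rw [hk]
    rcases max_choice (f (i, u)) (f (j, u)) with h | h
    · exact Or.inl (le_of_eq h)
    · exact Or.inr (le_of_eq h)
  set d : Fin 3 → Bool := fun m => decide (k ≤ f (m, u)) with hd
  have hdnc : ∃ a b : Fin 3, d a ≠ d b := by
    rcases hci with h | h
    · have h' : ¬ k ≤ f (j, u) := by
        rcases lt_or_gt_of_ne hne with hlt | hlt <;> omega
      exact ⟨i, j, by simp [hd, h, h']⟩
    · have h' : ¬ k ≤ f (i, u) := by
        rcases lt_or_gt_of_ne hne with hlt | hlt <;> omega
      exact ⟨j, i, by simp [hd, h, h']⟩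
  have hswitch : ∀ dd : Fin 3 → Bool, (∃ a b, dd a ≠ dd b) →
      ∃ m₁ m₂ : Fin 3, m₁ ≠ m₂ ∧ dd m₁ ≠ dd (m₁ + 1) ∧ dd m₂ ≠ dd (m₂ + 1) := by decide
  obtain ⟨m₁, m₂, hm12, hs1, hs2⟩ := hswitch d hdnc
  have hp1 : ¬ (k ≤ f (m₁, u) ↔ k ≤ f (m₁ + 1, u)) := fun hiff => hs1 (by
    simp only [hd]; exact decide_eq_decide.mpr hiff)
  have hp2 : ¬ (k ≤ f (m₂, u) ↔ k ≤ f (m₂ + 1, u)) := fun hiff => hs2 (by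
    simp only [hd]; exact decide_eq_decide.mpr hiff)
  set e₁ : (tripled T S).E := Sum.inr (⟨u, hu⟩, m₁) with he₁
  set e₂ : (tripled T S).E := Sum.inr (⟨u, hu⟩, m₂) with he₂
  have hb1 : 1 ≤ (tripled T S).perEdge f χ e₁ :=
    Multigraph.one_le_perEdge_threshold _ f k e₁ (m₁, u) (m₁ + 1, u) rfl hp1
  have hb2 : 1 ≤ (tripled T S).perEdge f χ e₂ :=
    Multigraph.one_le_perEdge_threshold _ f k e₂ (m₂, u) (m₂ + 1, u) rfl hp2
  have hnonneg : ∀ e, 0 ≤ (tripled T S).perEdge f χ e := fun e =>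
    Multigraph.perEdge_threshold_nonneg _ f k e
  have hlow : (3:ℤ) ≤ ∑ e, (tripled T S).perEdge f χ e := by
    by_cases hA : ∃ (m : Fin 3) (x y : T.V), k ≤ f (m, x) ∧ ¬ k ≤ f (m, y)
    · obtain ⟨m, x, y, hx, hy⟩ := hA
      set A : Finset T.V := Finset.univ.filter (fun z => k ≤ f (m, z)) with hA'
      have hAne : A.Nonempty := ⟨x, by simp [hA', hx]⟩
      have hAuniv : A ≠ Finset.univ := by
        intro h
        have := h ▸ Finset.mem_univ y
        rw [hA', Finset.mem_filter] at this
        exact hy this.2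
      obtain ⟨e₀, -, a, b, hab, ha, hb⟩ := hTc.2 A hAne hAuniv
      have ha' : k ≤ f (m, a) := by
        rw [hA', Finset.mem_filter] at ha; exact ha.2
      have hb' : ¬ k ≤ f (m, b) := by
        intro hc
        exact hb (by rw [hA', Finset.mem_filter]; exact ⟨Finset.mem_univ b, hc⟩)
      set e₃ : (tripled T S).E := Sum.inl (m, e₀) with he₃
      have hb3 : 1 ≤ (tripled T S).perEdge f χ e₃ := by
        refine Multigraph.one_le_perEdge_threshold _ f k e₃ (m, a) (m, b) ?_ ?_
        · rw [he₃, ends_inl, hab, Sym2.map_pair_eq]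
          rfl
        · intro hiff
          exact hb' (hiff.mp ha')
      exact Multigraph.three_le_sum _ hnonneg e₁ e₂ e₃
        (by rw [he₁, he₂]
            show ¬ (Sum.inr (⟨u, hu⟩, m₁) : (Fin 3 × T.E) ⊕ ({v // v ∈ S} × Fin 3)) = Sum.inr (⟨u, hu⟩, m₂)
            simp [hm12])
        (by rw [he₁, he₃]
            show ¬ (Sum.inr (⟨u, hu⟩, m₁) : (Fin 3 × T.E) ⊕ ({v // v ∈ S} × Fin 3)) = Sum.inl (m, e₀)
            simp)
        (by rw [he₂, he₃]
            show ¬ (Sum.inr (⟨u, hu⟩, m₂) : (Fin 3 × T.E) ⊕ ({v // v ∈ S} × Fin 3)) = Sum.inl (m, e₀)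
            simp)
        hb1 hb2 hb3
    · push_neg at hA
      obtain ⟨t, ht, htu⟩ := Finset.exists_mem_ne (s := S) (by omega) u
      have hsheet : ∀ (m : Fin 3) (x : T.V), (k ≤ f (m, x)) ↔ (k ≤ f (m, u)) :=
        fun m x => ⟨fun h => hA m x u h, fun h => hA m u x h⟩
      set e₃ : (tripled T S).E := Sum.inr (⟨t, ht⟩, m₁) with he₃
      have hb3 : 1 ≤ (tripled T S).perEdge f χ e₃ := by
        refine Multigraph.one_le_perEdge_threshold _ f k e₃ (m₁, t) (m₁ + 1, t) rfl ?_
        rw [hsheet m₁ t, hsheet (m₁ + 1) t]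
        exact hp1
      exact Multigraph.three_le_sum _ hnonneg e₁ e₂ e₃
        (by rw [he₁, he₂]
            show ¬ (Sum.inr (⟨u, hu⟩, m₁) : (Fin 3 × T.E) ⊕ ({v // v ∈ S} × Fin 3)) = Sum.inr (⟨u, hu⟩, m₂)
            simp [hm12])
        (by rw [he₁, he₃]
            show ¬ (Sum.inr (⟨u, hu⟩, m₁) : (Fin 3 × T.E) ⊕ ({v // v ∈ S} × Fin 3)) = Sum.inr (⟨t, ht⟩, m₁)
            simp [Subtype.ext_iff, Ne.symm htu])
        (by rw [he₂, he₃]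
            show ¬ (Sum.inr (⟨u, hu⟩, m₂) : (Fin 3 × T.E) ⊕ ({v // v ∈ S} × Fin 3)) = Sum.inr (⟨t, ht⟩, m₁)
            simp [Subtype.ext_iff, Ne.symm htu])
        hb1 hb2 hb3
  omega

lemma sheet_degree_invariant (hTc : T.Connected) (hS2 : 2 ≤ S.card)
    (f : (tripled T S).V → ℤ) (E E' : (tripled T S).Divisor)
    (hE : (tripled T S).Effective E) (hE' : (tripled T S).Effective E')
    (hL : (tripled T S).laplacian f = E - E')
    (hdeg : (tripled T S).degree E ≤ 2) (i : Fin 3) :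
    ∑ x, E (i, x) = ∑ x, E' (i, x) := by
  have hconst := triangle_const T S hTc hS2 f E E' hE hE' hL hdeg
  have h0 := sheet_sum_laplacian T S f hconst i
  rw [hL] at h0
  change ∑ x : T.V, (E (i, x) - E' (i, x)) = 0 at h0
  rw [Finset.sum_sub_distrib] at h0
  omega

end TripledAux

/-- Let `T` be a tree that is not a single vertex and let
`S ⊆ V(T)` have at least two vertices. Then `gon(𝒯(T)) = 3`. -/
theorem stmt_15 (T : Multigraph) (hT : T.IsTree) (hcard : 2 ≤ Fintype.card T.V)
    (S : Finset T.V) (hS : 2 ≤ S.card) :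
    (tripled T S).gonality = 3 := by
  classical
  obtain ⟨hTconn, hTgen⟩ := hT
  obtain ⟨v₀⟩ : Nonempty T.V := Fintype.card_pos_iff.mp (by omega)
  obtain ⟨s₀, hs₀⟩ : ∃ s, s ∈ S := Finset.card_pos.mp (by omega)
  set GS := {n : ℕ | ∃ D : (tripled T S).Divisor,
      (tripled T S).Effective D ∧ (tripled T S).degree D = (n : ℤ) ∧
        1 ≤ (tripled T S).rank D} with hGS
  set D₀ : (tripled T S).Divisor := fun p => if p.2 = v₀ then 1 else 0 with hD₀
  have hD₀eff : (tripled T S).Effective D₀ := by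
    intro p; rw [hD₀]; dsimp only; split_ifs <;> omega
  have hD₀deg : (tripled T S).degree D₀ = 3 := by
    show ∑ p : Fin 3 × T.V, D₀ p = 3
    rw [Fintype.sum_prod_type]
    have h1 : ∀ i : Fin 3, ∑ x : T.V, D₀ (i, x) = 1 := by
      intro i
      rw [hD₀]
      dsimp only
      rw [Finset.sum_ite_eq' Finset.univ v₀ (fun _ => (1:ℤ))]
      simp
    rw [Finset.sum_congr rfl fun i _ => h1 i]
    simp
  have hrge : (tripled T S).RankGe D₀ 1 := by
    intro F hF hdegF
    obtain ⟨p, rfl⟩ := (tripled T S).effective_degree_one F hF hdegF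
    obtain ⟨iw, w⟩ := p
    obtain ⟨g, hg⟩ := Multigraph.tree_single_equiv (Fintype.card T.V) T hTconn hTgen rfl v₀ w
    refine ⟨fun q => if q.2 = w ∧ ¬ q.1 = iw then 1 else 0,
      fun q => by dsimp only; split_ifs <;> omega, fun q => g q.2, ?_⟩
    funext q
    obtain ⟨jj, x⟩ := q
    rw [TripledAux.laplacian_lift]
    have hgx := congrFun hg x
    simp only [Pi.sub_apply, Multigraph.vertexDiv] at hgx
    rw [← hgx]
    simp only [Pi.sub_apply, hD₀]
    show (if x = v₀ then (1:ℤ) else 0) - (if ((jj, x) : Fin 3 × T.V) = (iw, w) then 1 else 0)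
      - (if x = w ∧ ¬ jj = iw then 1 else 0) = _
    by_cases hxw : x = w
    · by_cases hji : jj = iw
      · rw [if_pos (show ((jj, x) : Fin 3 × T.V) = (iw, w) by rw [hxw, hji]),
          if_neg (show ¬ (((jj, x) : Fin 3 × T.V).2 = w ∧ ¬ ((jj, x) : Fin 3 × T.V).1 = iw) by
            intro hc; exact hc.2 hji),
          if_pos hxw]
        ring
      · rw [if_neg (show ¬ ((jj, x) : Fin 3 × T.V) = (iw, w) from
            fun hc => hji (Prod.ext_iff.mp hc).1),
          if_pos (show (((jj, x) : Fin 3 × T.V).2 = w ∧ ¬ ((jj, x) : Fin 3 × T.V).1 = iw) from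
            ⟨hxw, hji⟩),
          if_pos hxw]
        ring
    · rw [if_neg (show ¬ ((jj, x) : Fin 3 × T.V) = (iw, w) from
          fun hc => hxw (Prod.ext_iff.mp hc).2),
        if_neg (show ¬ (((jj, x) : Fin 3 × T.V).2 = w ∧ ¬ ((jj, x) : Fin 3 × T.V).1 = iw) from
          fun hc => hxw hc.1),
        if_neg hxw]
      ring
  have h3mem : 3 ∈ GS := ⟨D₀, hD₀eff, by rw [hD₀deg]; norm_num,
    (tripled T S).one_le_rank ((0 : Fin 3), v₀) D₀ hrge⟩
  have hlower : ∀ n ∈ GS, 3 ≤ n := by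
    rintro n ⟨D, hDeff, hDdeg, hDrank⟩
    by_contra hn
    push_neg at hn
    have hrge1 := (tripled T S).rankGe_one_of_rank ((0 : Fin 3), v₀) D hDrank
    have hkey : ∀ i : Fin 3, (1:ℤ) ≤ ∑ x, D (i, x) := by
      intro i
      set δi : (tripled T S).Divisor := fun q => if q = (i, s₀) then 1 else 0 with hδi
      obtain ⟨Ei, hEieff, g, hgi⟩ := hrge1 δi
        (fun q => by rw [hδi]; dsimp only; split_ifs <;> omega)
        (by
          rw [hδi]
          convert (tripled T S).degree_single ((i : Fin 3), s₀) 1)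
      have hL : (tripled T S).laplacian g = D - (δi + Ei) := by
        rw [← hgi]
        funext q
        simp only [Pi.sub_apply, Pi.add_apply]
        ring
      have hEdeg : (tripled T S).degree D ≤ 2 := by rw [hDdeg]; omega
      have hinv := TripledAux.sheet_degree_invariant T S hTconn hS g D
        (δi + Ei) hDeff
        (fun q => by
          have h1 := hEieff q
          have h2 : (0:ℤ) ≤ δi q := by rw [hδi]; dsimp only; split_ifs <;> omega
          simp only [Pi.add_apply]
          omega)
        hL hEdeg i
      rw [hinv]
      have hterm : (1:ℤ) ≤ (δi + Ei) (i, s₀) := by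
        have h1 := hEieff ((i : Fin 3), s₀)
        have h2 : δi ((i : Fin 3), s₀) = 1 := by rw [hδi]; exact if_pos rfl
        show (1:ℤ) ≤ δi ((i : Fin 3), s₀) + Ei ((i : Fin 3), s₀)
        omega
      have hnn : ∀ x ∈ Finset.univ, (0:ℤ) ≤ (δi + Ei) (i, x) := fun x _ => by
        have h1 := hEieff ((i : Fin 3), x)
        have h2 : (0:ℤ) ≤ δi ((i : Fin 3), x) := by rw [hδi]; dsimp only; split_ifs <;> omega
        show (0:ℤ) ≤ δi ((i : Fin 3), x) + Ei ((i : Fin 3), x)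
        omega
      exact le_trans hterm (Finset.single_le_sum hnn (Finset.mem_univ s₀))
    have hge3 : (3:ℤ) ≤ (tripled T S).degree D := by
      show (3:ℤ) ≤ ∑ p : Fin 3 × T.V, D p
      refine le_of_le_of_eq ?_ (Fintype.sum_prod_type (f := fun p : Fin 3 × T.V => D p)).symm
      calc (3:ℤ) = ∑ _i : Fin 3, 1 := by simp
        _ ≤ ∑ i : Fin 3, ∑ x, D (i, x) := Finset.sum_le_sum fun i _ => hkey i
    rw [hDdeg] at hge3
    omega
  exact le_antisymm (Nat.sInf_le h3mem) (le_csInf ⟨3, h3mem⟩ hlower)
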